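/- The system of equations in real variables A₂ > 0, A₃, B₃, A₄, B₄ with parameters c > 0, s ≠ 0, c² + s² = 1, given by (A₃A₄, A₂B₃, B₃B₄) = k(−(c²+5s²), 5sc, c²) and (A₂A₃, A₃B₄, B₃A₄) = l(5s, c, c) for some k, l ∈ ℝ, forces k = l = 0, and hence A₃ = B₃ = 0. -/
import Mathlib

/- STATEMENT 10: The system
(A₃A₄, A₂B₃, B₃B₄) = k(−(c²+5s²), 5sc, c²), (A₂A₃, A₃B₄, B₃A₄) = l(5s, c, c),
with A₂ > 0, c > 0, s ≠ 0, c² + s² = 1 forces k = l = 0 and A₃ = B₃ = 0. -/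
theorem key_algebraic_step_forces_zero
    (c s A₂ A₃ B₃ A₄ B₄ k l : ℝ)
    (hc : 0 < c) (hs : s ≠ 0) (hcs : c ^ 2 + s ^ 2 = 1) (hA₂ : 0 < A₂)
    (h1 : A₃ * A₄ = k * (-(c ^ 2 + 5 * s ^ 2)))
    (h2 : A₂ * B₃ = k * (5 * s * c))
    (h3 : B₃ * B₄ = k * c ^ 2)
    (h4 : A₂ * A₃ = l * (5 * s))
    (h5 : A₃ * B₄ = l * c)
    (h6 : B₃ * A₄ = l * c) :
    k = 0 ∧ l = 0 ∧ A₃ = 0 ∧ B₃ = 0 := by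
  have key : (A₃ * A₄) * (B₃ * B₄) = (A₃ * B₄) * (B₃ * A₄) := by ring
  rw [h1, h3, h5, h6] at key
  have hsum : k ^ 2 * ((c ^ 2 + 5 * s ^ 2) * c ^ 2) + l ^ 2 * c ^ 2 = 0 := by
    linear_combination -key
  have hpos : 0 < (c ^ 2 + 5 * s ^ 2) * c ^ 2 := by positivity
  have hk2 : k ^ 2 * ((c ^ 2 + 5 * s ^ 2) * c ^ 2) = 0 := by nlinarith [sq_nonneg k, sq_nonneg l, sq_nonneg c]
  have hk : k = 0 := by
    rcases mul_eq_zero.1 hk2 with h | h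
    · exact pow_eq_zero_iff (n := 2) (by norm_num) |>.1 h
    · exact absurd h hpos.ne'
  have hl : l = 0 := by
    have : l ^ 2 * c ^ 2 = 0 := by nlinarith
    rcases mul_eq_zero.1 this with h | h
    · exact pow_eq_zero_iff (n := 2) (by norm_num) |>.1 h
    · exact absurd h (by positivity)
  subst hk hl
  refine ⟨rfl, rfl, ?_, ?_⟩
  · rcases mul_eq_zero.1 (by linarith [h4] : A₂ * A₃ = 0) with h | h
    · exact absurd h hA₂.ne'
    · exact h
  · rcases mul_eq_zero.1 (by linarith [h2] : A₂ * B₃ = 0) with h | h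
    · exact absurd h hA₂.ne'
    · exact h
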